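/- Let N, M, D, L, n be integers with N ≥ 1, 1 ≤ M ≤ D, M + D ≤ N, L ≥ 0 and n ≥ L + D, and let Δ₁ > 0, ε ∈ (0,1), C₀ ≥ 0 and κ > 0, with the additional requirement κ > L/N in the case M + D = N. Suppose V : ℝ² × [τ₁,∞) → ℝ is C¹ and for every τ ≥ τ₁ and every (ρ,φ) with W₀(ρ,φ,τ₁) ≤ Δ₁² one has (1−ε) W₀(ρ,φ,τ) ≤ V(ρ,φ,τ) ≤ (1+ε) W₀(ρ,φ,τ) and 𝒟V(ρ,φ,τ) ≤ −κ τ^{−(M+D)/N} V(ρ,φ,τ) + C₀ τ^{−(M+n+1)/N} (Q|ρ| + τ^{−L/N} λ₀ |φ|). Then the zero solution is stable and attracting in the following sense: for every ε' ∈ (0,Δ₁) there exist δ > 0 and τ_s ≥ τ₁ such that every solution (ρ(τ),φ(τ)) with W₀(ρ(τ_s),φ(τ_s),τ₁) ≤ δ² satisfies W₀(ρ(τ),φ(τ),τ₁) ≤ ε'² for all τ ≥ τ_s; moreover there exist η > 0 and C > 0 (depending on the data) such that such solutions satisfy W₀(ρ(τ),φ(τ),τ₁) ≤ C τ^{−η}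 for all sufficiently large τ, and in particular (ρ(τ),φ(τ)) → (0,0) as τ → ∞. -/

import Mathlib

open Real

/-- `W₀(ρ,φ,τ) = (Q ρ² + τ^{−L/N} λ₀ φ²)/2`. -/
noncomputable def W0 (Q lam0 : ℝ) (N L : ℕ) (ρ φ τ : ℝ) : ℝ :=
  (Q * ρ ^ 2 + τ ^ (-(L : ℝ) / (N : ℝ)) * lam0 * φ ^ 2) / 2

/-- Derivative of `V` along the system `dρ/dτ = τ^{−M/N} A(ρ,φ,τ)`,
`dφ/dτ = τ^{−M/N} B(ρ,φ,τ)`: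
`𝒟V = ∂_τV + τ^{−M/N}(A ∂_ρV + B ∂_φV)`. -/
noncomputable def DV (N M : ℕ) (A B V : ℝ → ℝ → ℝ → ℝ) (ρ φ τ : ℝ) : ℝ :=
  deriv (fun t => V ρ φ t) τ +
    τ ^ (-(M : ℝ) / (N : ℝ)) *
      (A ρ φ τ * deriv (fun r => V r φ τ) ρ + B ρ φ τ * deriv (fun p => V ρ p τ) φ)

/-- A solution on `[τ₁,∞)` of the planar system
`dρ/dτ = τ^{−M/N} A(ρ,φ,τ)`, `dφ/dτ = τ^{−M/N} B(ρ,φ,τ)`. -/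
def IsSolution (N M : ℕ) (A B : ℝ → ℝ → ℝ → ℝ) (τ₁ : ℝ) (ρ φ : ℝ → ℝ) : Prop :=
  ∀ τ ≥ τ₁, HasDerivAt ρ (τ ^ (-(M : ℝ) / (N : ℝ)) * A (ρ τ) (φ τ) τ) τ ∧
    HasDerivAt φ (τ ^ (-(M : ℝ) / (N : ℝ)) * B (ρ τ) (φ τ) τ) τ


section Aux

open Real Filter Set Topology

lemma expL_nonpos (N L : ℕ) : -(L : ℝ) / (N : ℝ) ≤ 0 :=
  div_nonpos_iff.mpr (Or.inr ⟨neg_nonpos.mpr (Nat.cast_nonneg _), Nat.cast_nonneg _⟩)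

lemma W0_nonneg {Q lam0 : ℝ} (hQ : 0 < Q) (hl : 0 < lam0) (N L : ℕ) {τ : ℝ} (hτ : 0 < τ)
    (ρ φ : ℝ) : 0 ≤ W0 Q lam0 N L ρ φ τ := by
  have := Real.rpow_pos_of_pos hτ (-(L : ℝ) / (N : ℝ))
  unfold W0; positivity

lemma W0_mono {Q lam0 : ℝ} (hQ : 0 < Q) (hl : 0 < lam0) (N L : ℕ) {τ₁ τ : ℝ}
    (h1 : 0 < τ₁) (h2 : τ₁ ≤ τ) (ρ φ : ℝ) :
    W0 Q lam0 N L ρ φ τ ≤ W0 Q lam0 N L ρ φ τ₁ := by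
  unfold W0
  have hr : τ ^ (-(L : ℝ) / (N : ℝ)) ≤ τ₁ ^ (-(L : ℝ) / (N : ℝ)) :=
    Real.rpow_le_rpow_of_nonpos h1 h2 (expL_nonpos N L)
  have hφ : (0:ℝ) ≤ lam0 * φ ^ 2 := by positivity
  nlinarith [hr, hφ]

/-- `W0` at time `τ₁` is controlled by `τ^{L/N}` times `W0` at time `τ`. -/
lemma W0_tau1_le {Q lam0 : ℝ} (hQ : 0 < Q) (hl : 0 < lam0) (N L : ℕ) {τ₁ τ : ℝ}
    (h1 : 1 ≤ τ₁) (h2 : τ₁ ≤ τ) (ρ φ : ℝ) :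
    W0 Q lam0 N L ρ φ τ₁ ≤ τ ^ ((L : ℝ) / (N : ℝ)) * W0 Q lam0 N L ρ φ τ := by
  have hτ0 : (0:ℝ) < τ := lt_of_lt_of_le (lt_of_lt_of_le zero_lt_one h1) h2
  have hτ1 : (1:ℝ) ≤ τ := le_trans h1 h2
  have hge1 : (1:ℝ) ≤ τ ^ ((L : ℝ) / (N : ℝ)) :=
    Real.one_le_rpow hτ1 (by positivity)
  have hkey : τ₁ ^ (-(L : ℝ) / (N : ℝ)) ≤ τ ^ ((L : ℝ) / (N : ℝ)) * τ ^ (-(L : ℝ) / (N : ℝ)) := by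
    rw [← Real.rpow_add hτ0]
    rw [show (L : ℝ) / (N : ℝ) + -(L : ℝ) / (N : ℝ) = 0 by ring, Real.rpow_zero]
    exact Real.rpow_le_one_of_one_le_of_nonpos h1 (expL_nonpos N L)
  unfold W0
  have h1' : Q * ρ ^ 2 ≤ τ ^ ((L : ℝ) / (N : ℝ)) * (Q * ρ ^ 2) := by
    nlinarith [mul_nonneg (mul_nonneg (sub_nonneg.mpr hge1) hQ.le) (sq_nonneg ρ)]
  have h2' : τ₁ ^ (-(L : ℝ) / (N : ℝ)) * lam0 * φ ^ 2
      ≤ τ ^ ((L : ℝ) / (N : ℝ)) * (τ ^ (-(L : ℝ) / (N : ℝ)) * lam0 * φ ^ 2) := by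
    have := mul_le_mul_of_nonneg_right hkey (by positivity : (0:ℝ) ≤ lam0 * φ ^ 2)
    nlinarith [this]
  nlinarith [h1', h2']

/-- bound on the disturbance term by `sqrt` of `W0`. -/
lemma g_bound {Q lam0 : ℝ} (hQ : 0 < Q) (hl : 0 < lam0) (N L : ℕ) {τ : ℝ}
    (hτ : 1 ≤ τ) (ρ φ : ℝ) :
    Q * |ρ| + τ ^ (-(L : ℝ) / (N : ℝ)) * lam0 * |φ| ≤
      (Real.sqrt Q + Real.sqrt lam0) * Real.sqrt 2 * Real.sqrt (W0 Q lam0 N L ρ φ τ) := by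
  have hτ0 : (0:ℝ) < τ := lt_of_lt_of_le zero_lt_one hτ
  set s : ℝ := τ ^ (-(L : ℝ) / (N : ℝ)) with hs
  have hs0 : 0 < s := Real.rpow_pos_of_pos hτ0 _
  have hs1 : s ≤ 1 := Real.rpow_le_one_of_one_le_of_nonpos hτ (expL_nonpos N L)
  set W : ℝ := W0 Q lam0 N L ρ φ τ with hW
  have hWval : W = (Q * ρ ^ 2 + s * lam0 * φ ^ 2) / 2 := rfl
  have hW0 : 0 ≤ W := W0_nonneg hQ hl N L hτ0 ρ φ
  have hQr : Q * ρ ^ 2 ≤ 2 * W := by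
    rw [hWval]; nlinarith [mul_nonneg (mul_nonneg hs0.le hl.le) (sq_nonneg φ)]
  have hlp : s * lam0 * φ ^ 2 ≤ 2 * W := by
    rw [hWval]; nlinarith [mul_nonneg hQ.le (sq_nonneg ρ)]
  have h1 : Real.sqrt Q * |ρ| ≤ Real.sqrt (2 * W) := by
    rw [show Real.sqrt Q * |ρ| = Real.sqrt (Q * ρ ^ 2) by
      rw [Real.sqrt_mul hQ.le, Real.sqrt_sq_eq_abs]]
    exact Real.sqrt_le_sqrt hQr
  have h1' : Q * |ρ| ≤ Real.sqrt Q * Real.sqrt (2 * W) := by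
    calc Q * |ρ| = Real.sqrt Q * (Real.sqrt Q * |ρ|) := by
          rw [← mul_assoc, Real.mul_self_sqrt hQ.le]
      _ ≤ Real.sqrt Q * Real.sqrt (2 * W) :=
          mul_le_mul_of_nonneg_left h1 (Real.sqrt_nonneg _)
  have h2 : Real.sqrt s * Real.sqrt lam0 * |φ| ≤ Real.sqrt (2 * W) := by
    rw [show Real.sqrt s * Real.sqrt lam0 * |φ| = Real.sqrt (s * lam0 * φ ^ 2) by
      rw [Real.sqrt_mul (by positivity), Real.sqrt_mul hs0.le, Real.sqrt_sq_eq_abs, mul_assoc]]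
    exact Real.sqrt_le_sqrt hlp
  have hss : s ≤ Real.sqrt s := by
    nlinarith [Real.sq_sqrt hs0.le, Real.sqrt_nonneg s, Real.sqrt_le_sqrt hs1, Real.sqrt_one]
  have h2' : s * lam0 * |φ| ≤ Real.sqrt lam0 * Real.sqrt (2 * W) := by
    calc s * lam0 * |φ| ≤ Real.sqrt s * lam0 * |φ| := by
          apply mul_le_mul_of_nonneg_right _ (abs_nonneg φ)
          exact mul_le_mul_of_nonneg_right hss hl.le
      _ = Real.sqrt lam0 * (Real.sqrt s * Real.sqrt lam0 * |φ|) := by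
          rw [show Real.sqrt lam0 * (Real.sqrt s * Real.sqrt lam0 * |φ|)
            = (Real.sqrt lam0 * Real.sqrt lam0) * (Real.sqrt s * |φ|) by ring,
            Real.mul_self_sqrt hl.le]; ring
      _ ≤ Real.sqrt lam0 * Real.sqrt (2 * W) :=
          mul_le_mul_of_nonneg_left h2 (Real.sqrt_nonneg _)
  have hsum := add_le_add h1' h2'
  have hsplit : Real.sqrt (2 * W) = Real.sqrt 2 * Real.sqrt W := Real.sqrt_mul (by norm_num) _
  calc Q * |ρ| + s * lam0 * |φ|
      ≤ Real.sqrt Q * Real.sqrt (2*W) + Real.sqrt lam0 * Real.sqrt (2*W) := hsum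
    _ = (Real.sqrt Q + Real.sqrt lam0) * Real.sqrt 2 * Real.sqrt W := by rw [hsplit]; ring

lemma slope_nonneg_of_left_neg {g : ℝ → ℝ} {g' t τs : ℝ} (h : HasDerivAt g g' t)
    (hts : τs < t) (h0 : g t = 0) (hneg : ∀ s ∈ Set.Ico τs t, g s < 0) : 0 ≤ g' := by
  rw [hasDerivAt_iff_tendsto_slope] at h
  have hsub : Set.Ico τs t ⊆ {t}ᶜ := fun s hs => ne_of_lt hs.2
  have hmem : t ∈ closure (Set.Ico τs t) := by
    rw [closure_Ico (ne_of_lt hts)]; exact ⟨le_of_lt hts, le_rfl⟩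
  have hne : (𝓝[Set.Ico τs t] t).NeBot := mem_closure_iff_nhdsWithin_neBot.mp hmem
  refine ge_of_tendsto (h.mono_left (nhdsWithin_mono _ hsub)) ?_
  filter_upwards [self_mem_nhdsWithin] with s hs
  have h1 : g s < 0 := hneg s hs
  have h2 : s - t < 0 := sub_neg.mpr hs.2
  have : (0:ℝ) < (g s - g t) / (s - t) := by
    rw [h0, sub_zero]; exact div_pos_of_neg_of_neg h1 h2
  rw [slope_def_field]
  exact this.le

lemma hasDerivAt_comp3 {V : ℝ → ℝ → ℝ → ℝ}
    (hV : ContDiff ℝ 1 fun p : ℝ × ℝ × ℝ => V p.1 p.2.1 p.2.2)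
    {ρ φ : ℝ → ℝ} {t rd pd : ℝ} (hρ : HasDerivAt ρ rd t) (hφ : HasDerivAt φ pd t) :
    HasDerivAt (fun s => V (ρ s) (φ s) s)
      (rd * deriv (fun r => V r (φ t) t) (ρ t) + pd * deriv (fun p => V (ρ t) p t) (φ t)
        + deriv (fun u => V (ρ t) (φ t) u) t) t := by
  set F : ℝ × ℝ × ℝ → ℝ := fun p => V p.1 p.2.1 p.2.2 with hF
  have hFd : ∀ x : ℝ × ℝ × ℝ, HasFDerivAt F (fderiv ℝ F x) x :=
    fun x => (hV.differentiable one_ne_zero x).hasFDerivAt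
  set x : ℝ × ℝ × ℝ := (ρ t, φ t, t) with hx
  have hc : HasDerivAt (fun s => (ρ s, φ s, s)) (rd, pd, 1) t :=
    hρ.prodMk (hφ.prodMk (hasDerivAt_id t))
  have hcomp : HasDerivAt (fun s => V (ρ s) (φ s) s) (fderiv ℝ F x (rd, pd, 1)) t :=
    by have h := (hFd x).comp_hasDerivAt t hc; exact h
  have h1 : deriv (fun r => V r (φ t) t) (ρ t) = fderiv ℝ F x (1, 0, 0) := by
    have : HasDerivAt (fun r => V r (φ t) t) (fderiv ℝ F x ((1:ℝ), (0:ℝ), (0:ℝ))) (ρ t) := by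
      have hcr : HasDerivAt (fun r : ℝ => (r, φ t, t)) ((1:ℝ), (0:ℝ), (0:ℝ)) (ρ t) :=
        (hasDerivAt_id (ρ t)).prodMk ((hasDerivAt_const _ _).prodMk (hasDerivAt_const _ _))
      exact (hFd x).comp_hasDerivAt _ hcr
    exact this.deriv
  have h2 : deriv (fun p => V (ρ t) p t) (φ t) = fderiv ℝ F x (0, 1, 0) := by
    have : HasDerivAt (fun p => V (ρ t) p t) (fderiv ℝ F x ((0:ℝ), (1:ℝ), (0:ℝ))) (φ t) := by
      have hcr : HasDerivAt (fun p : ℝ => (ρ t, p, t)) ((0:ℝ), (1:ℝ), (0:ℝ)) (φ t) :=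
        (hasDerivAt_const _ _).prodMk ((hasDerivAt_id (φ t)).prodMk (hasDerivAt_const _ _))
      exact (hFd x).comp_hasDerivAt _ hcr
    exact this.deriv
  have h3 : deriv (fun u => V (ρ t) (φ t) u) t = fderiv ℝ F x (0, 0, 1) := by
    have : HasDerivAt (fun u => V (ρ t) (φ t) u) (fderiv ℝ F x ((0:ℝ), (0:ℝ), (1:ℝ))) t := by
      have hcr : HasDerivAt (fun u : ℝ => (ρ t, φ t, u)) ((0:ℝ), (0:ℝ), (1:ℝ)) t :=
        (hasDerivAt_const _ _).prodMk ((hasDerivAt_const _ _).prodMk (hasDerivAt_id t))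
      exact (hFd x).comp_hasDerivAt _ hcr
    exact this.deriv
  rw [h1, h2, h3]
  have hdecomp : ((rd, pd, 1) : ℝ × ℝ × ℝ)
      = rd • ((1:ℝ), (0:ℝ), (0:ℝ)) + pd • ((0:ℝ), (1:ℝ), (0:ℝ)) + (1:ℝ) • ((0:ℝ), (0:ℝ), (1:ℝ)) := by
    simp [Prod.ext_iff]
  have key : (fderiv ℝ F x) ((rd, pd, 1) : ℝ × ℝ × ℝ)
      = rd * (fderiv ℝ F x) (1, 0, 0) + pd * (fderiv ℝ F x) (0, 1, 0)
        + (fderiv ℝ F x) (0, 0, 1) := by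
    conv_lhs => rw [hdecomp]
    simp only [map_add, map_smul, smul_eq_mul, one_mul]
  rw [← key]
  exact hcomp

lemma barrier {v w G : ℝ → ℝ} {τs Δ : ℝ}
    (hv : ∀ t ≥ τs, ContinuousAt v t) (hw : ∀ t ≥ τs, ContinuousAt w t)
    (hG : ∀ t ≥ τs, ContinuousAt G t)
    (h0v : v τs < w τs) (h0G : G τs < Δ)
    (hreg : ∀ t ≥ τs, v t ≤ w t → G t ≤ Δ → G t < Δ)
    (hkey : ∀ t > τs, G t ≤ Δ → v t = w t →
      (∀ s ∈ Set.Ico τs t, v s < w s) → False) :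
    ∀ t ≥ τs, v t < w t ∧ G t < Δ := by
  by_contra hcon
  push_neg at hcon
  set E : Set ℝ := {t | τs ≤ t ∧ (w t ≤ v t ∨ Δ ≤ G t)} with hE
  have hEne : E.Nonempty := by
    obtain ⟨t, ht, hor⟩ := hcon
    refine ⟨t, ht, ?_⟩
    by_cases h : v t < w t
    · exact Or.inr (hor h)
    · exact Or.inl (not_lt.mp h)
  have hbdd : BddBelow E := ⟨τs, fun t ht => ht.1⟩
  set c := sInf E with hc
  have hcs : τs ≤ c := le_csInf hEne fun t ht => ht.1
  have hleft : ∀ s ∈ Set.Ico τs c, v s < w s ∧ G s < Δ := by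
    intro s hs
    by_contra hbad
    push_neg at hbad
    have hsE : s ∈ E := by
      refine ⟨hs.1, ?_⟩
      by_cases h : v s < w s
      · exact Or.inr (hbad h)
      · exact Or.inl (not_lt.mp h)
    exact absurd (csInf_le hbdd hsE) (not_le.mpr hs.2)
  have hnotboth : ¬(v c < w c ∧ G c < Δ) := by
    rintro ⟨h1, h2⟩
    have hU : {t | v t < w t ∧ G t < Δ} ∈ 𝓝 c := by
      have c1 : ContinuousAt (fun t => w t - v t) c := (hw c hcs).sub (hv c hcs)
      have c2 : ContinuousAt (fun t => Δ - G t) c := continuousAt_const.sub (hG c hcs)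
      have e1 : {t | 0 < w t - v t} ∈ 𝓝 c :=
        c1 (Ioi_mem_nhds (by show (0:ℝ) < w c - v c; linarith))
      have e2 : {t | 0 < Δ - G t} ∈ 𝓝 c :=
        c2 (Ioi_mem_nhds (by show (0:ℝ) < Δ - G c; linarith))
      filter_upwards [e1, e2] with t ht1 ht2
      exact ⟨by linarith [ht1], by linarith [ht2]⟩
    obtain ⟨η, hη, hball⟩ := Metric.mem_nhds_iff.mp hU
    obtain ⟨x, hxE, hxlt⟩ := (csInf_lt_iff hbdd hEne).mp (show sInf E < c + η by linarith)
    have hxge : c ≤ x := csInf_le hbdd hxE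
    have hxball : x ∈ Metric.ball c η := by
      rw [Metric.mem_ball, Real.dist_eq, abs_lt]
      constructor <;> linarith
    obtain ⟨hx1, hx2⟩ := hball hxball
    rcases hxE.2 with h | h
    · exact absurd hx1 (not_lt.mpr h)
    · exact absurd hx2 (not_lt.mpr h)
  have hcgt : τs < c := by
    rcases eq_or_lt_of_le hcs with h | h
    · exact absurd ⟨h ▸ h0v, h ▸ h0G⟩ hnotboth
    · exact h
  have hmem : c ∈ closure (Set.Ico τs c) := by
    rw [closure_Ico (ne_of_lt hcgt)]; exact ⟨le_of_lt hcgt, le_rfl⟩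
  have hne : (𝓝[Set.Ico τs c] c).NeBot := mem_closure_iff_nhdsWithin_neBot.mp hmem
  have hvw : v c ≤ w c := by
    have ht : Tendsto (fun t => w t - v t) (𝓝[Set.Ico τs c] c) (𝓝 (w c - v c)) :=
      (((hw c hcs).sub (hv c hcs)).continuousWithinAt).tendsto
    have hpos : ∀ᶠ t in 𝓝[Set.Ico τs c] c, 0 ≤ w t - v t := by
      filter_upwards [self_mem_nhdsWithin] with s hs
      linarith [(hleft s hs).1]
    linarith [ge_of_tendsto ht hpos]
  have hGc : G c ≤ Δ := by
    have ht : Tendsto (fun t => Δ - G t) (𝓝[Set.Ico τs c] c) (𝓝 (Δ - G c)) :=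
      ((continuousAt_const.sub (hG c hcs)).continuousWithinAt).tendsto
    have hpos : ∀ᶠ t in 𝓝[Set.Ico τs c] c, 0 ≤ Δ - G t := by
      filter_upwards [self_mem_nhdsWithin] with s hs
      linarith [(hleft s hs).2]
    linarith [ge_of_tendsto ht hpos]
  rcases not_and_or.mp hnotboth with h | h
  · have heq : v c = w c := le_antisymm hvw (not_lt.mp h)
    exact hkey c hcgt hGc heq (fun s hs => (hleft s hs).1)
  · exact absurd (hreg c hcs hvw hGc) h

end Aux

set_option maxHeartbeats 2000000 in
/-- persistence of phase locking under the remainders of averaging: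
If `V` is sandwiched between `(1±ε) W₀` and satisfies the perturbed decay estimate
`𝒟V ≤ −κ τ^{−(M+D)/N} V + C₀ τ^{−(M+n+1)/N}(Q|ρ| + τ^{−L/N} λ₀|φ|)` on the region
`{W₀(·,·,τ₁) ≤ Δ₁²}` (with `M ≤ D`, `M + D ≤ N`, `n ≥ L + D`, `κ > 0`, and `κ > L/N`
when `M + D = N`), then the zero solution is stable and attracting: for every
`ε' ∈ (0,Δ₁)` there are `δ > 0` and `τ_s ≥ τ₁` such that every solution with
`W₀(ρ(τ_s),φ(τ_s),τ₁) ≤ δ²` satisfies `W₀(ρ(τ),φ(τ),τ₁) ≤ ε'²` for all `τ ≥ τ_s`, and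
moreover `W₀(ρ(τ),φ(τ),τ₁) ≤ C τ^{−η}` for some `η, C > 0` and all large `τ`; in
particular `(ρ(τ),φ(τ)) → (0,0)`. -/
theorem statement13 (Q lam0 : ℝ) (hQ : 0 < Q) (hlam0 : 0 < lam0)
    (N M D L n : ℕ) (hN : 1 ≤ N) (hM : 1 ≤ M) (hMD : M ≤ D) (hMDN : M + D ≤ N)
    (hn : L + D ≤ n)
    (τ₁ : ℝ) (hτ₁ : 1 ≤ τ₁)
    (A B : ℝ → ℝ → ℝ → ℝ)
    (hA : Continuous fun p : ℝ × ℝ × ℝ => A p.1 p.2.1 p.2.2)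
    (hB : Continuous fun p : ℝ × ℝ × ℝ => B p.1 p.2.1 p.2.2)
    (hA0 : ∀ τ ≥ τ₁, A 0 0 τ = 0) (hB0 : ∀ τ ≥ τ₁, B 0 0 τ = 0)
    (Δ₁ ε κ C₀ : ℝ) (hΔ₁ : 0 < Δ₁) (hε : ε ∈ Set.Ioo (0 : ℝ) 1) (hκ : 0 < κ)
    (hκ' : M + D = N → (L : ℝ) / (N : ℝ) < κ) (hC₀ : 0 ≤ C₀)
    (V : ℝ → ℝ → ℝ → ℝ)
    (hV : ContDiff ℝ 1 fun p : ℝ × ℝ × ℝ => V p.1 p.2.1 p.2.2)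
    (hsand : ∀ τ ≥ τ₁, ∀ ρ φ : ℝ, W0 Q lam0 N L ρ φ τ₁ ≤ Δ₁ ^ 2 →
      (1 - ε) * W0 Q lam0 N L ρ φ τ ≤ V ρ φ τ ∧ V ρ φ τ ≤ (1 + ε) * W0 Q lam0 N L ρ φ τ)
    (hdecay : ∀ τ ≥ τ₁, ∀ ρ φ : ℝ, W0 Q lam0 N L ρ φ τ₁ ≤ Δ₁ ^ 2 →
      DV N M A B V ρ φ τ ≤ -κ * τ ^ (-((M : ℝ) + (D : ℝ)) / (N : ℝ)) * V ρ φ τ +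
        C₀ * τ ^ (-((M : ℝ) + (n : ℝ) + 1) / (N : ℝ)) *
          (Q * |ρ| + τ ^ (-(L : ℝ) / (N : ℝ)) * lam0 * |φ|)) :
    ∀ ε' : ℝ, 0 < ε' → ε' < Δ₁ →
      ∃ δ > (0 : ℝ), ∃ τs ≥ τ₁,
        ∀ ρ φ : ℝ → ℝ, IsSolution N M A B τ₁ ρ φ →
          W0 Q lam0 N L (ρ τs) (φ τs) τ₁ ≤ δ ^ 2 →
          (∀ τ ≥ τs, W0 Q lam0 N L (ρ τ) (φ τ) τ₁ ≤ ε' ^ 2) ∧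
          (∃ η > (0 : ℝ), ∃ C > (0 : ℝ), ∃ T ≥ τs, ∀ τ ≥ T,
            W0 Q lam0 N L (ρ τ) (φ τ) τ₁ ≤ C * τ ^ (-η)) ∧
          Filter.Tendsto (fun τ => (ρ τ, φ τ)) Filter.atTop (nhds (0, 0)) := by
  obtain ⟨hε0, hε1⟩ := hε
  intro ε' hε'0 hε'Δ
  have hN0 : (0:ℝ) < (N:ℝ) := by exact_mod_cast Nat.lt_of_lt_of_le Nat.zero_lt_one hN
  have h1ε : (0:ℝ) < 1 - ε := by linarith
  set L' : ℝ := (L:ℝ)/(N:ℝ) with hL'def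
  set a : ℝ := ((M:ℝ)+(D:ℝ))/(N:ℝ) with hadef
  set b : ℝ := ((M:ℝ)+(n:ℝ)+1)/(N:ℝ) with hbdef
  have hL'0 : 0 ≤ L' := by positivity
  have hM1 : (1:ℝ) ≤ (M:ℝ) := by exact_mod_cast hM
  have ha0 : 0 < a := by
    have hD0 : (0:ℝ) ≤ (D:ℝ) := Nat.cast_nonneg _
    rw [hadef]
    apply div_pos (by linarith) hN0
  have ha1 : a ≤ 1 := by
    rw [hadef, div_le_one hN0]
    exact_mod_cast hMDN
  have hab : a - b ≤ -((L:ℝ)+1)/(N:ℝ) := by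
    have hcast : (L:ℝ) + (D:ℝ) ≤ (n:ℝ) := by exact_mod_cast hn
    rw [hadef, hbdef, div_sub_div_same, div_le_div_iff₀ hN0 hN0]
    have hxy : (M:ℝ)+(D:ℝ)-((M:ℝ)+(n:ℝ)+1) ≤ -((L:ℝ)+1) := by linarith
    exact mul_le_mul_of_nonneg_right hxy hN0.le
  set μ : ℝ := if M + D = N then min ((L'+κ)/2) ((2*(L:ℝ)+1)/(N:ℝ)) else (2*(L:ℝ)+1)/(N:ℝ)
    with hμdef
  have h2L : L' < (2*(L:ℝ)+1)/(N:ℝ) := by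
    rw [hL'def, div_lt_div_iff₀ hN0 hN0]
    exact mul_lt_mul_of_pos_right (by linarith [Nat.cast_nonneg (α := ℝ) L]) hN0
  have hμL : L' < μ := by
    rw [hμdef]; split_ifs with hcase
    · exact lt_min (by linarith [hκ' hcase]) h2L
    · exact h2L
  have hμub : μ ≤ (2*(L:ℝ)+1)/(N:ℝ) := by
    rw [hμdef]; split_ifs
    exacts [min_le_right _ _, le_rfl]
  have hμ0 : 0 < μ := lt_of_le_of_lt hL'0 hμL
  set γ : ℝ := if M + D = N then κ - μ else κ/2 with hγdef
  have hγ0 : 0 < γ := by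
    rw [hγdef]; split_ifs with hcase
    · have hμle : μ ≤ (L'+κ)/2 := by rw [hμdef, if_pos hcase]; exact min_le_left _ _
      linarith [hκ' hcase]
    · linarith
  have he : a - b + μ/2 ≤ -(1:ℝ)/(2*(N:ℝ)) := by
    have h1 : μ/2 ≤ (2*(L:ℝ)+1)/(2*(N:ℝ)) := by
      have h2 : (2*(L:ℝ)+1)/(N:ℝ)/2 = (2*(L:ℝ)+1)/(2*(N:ℝ)) := by ring
      linarith [hμub]
    have h2 : -((L:ℝ)+1)/(N:ℝ) + (2*(L:ℝ)+1)/(2*(N:ℝ)) = -(1:ℝ)/(2*(N:ℝ)) := by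
      field_simp
      ring
    linarith [hab]
  set c₁ : ℝ := (Real.sqrt Q + Real.sqrt lam0) * Real.sqrt 2 with hc₁def
  have hc₁0 : 0 ≤ c₁ := by positivity
  set C₂ : ℝ := C₀ * c₁ / Real.sqrt (1-ε) with hC₂def
  have hC₂0 : 0 ≤ C₂ := div_nonneg (mul_nonneg hC₀ hc₁0) (Real.sqrt_nonneg _)
  set m : ℝ := min Δ₁ ε' with hmdef
  have hm0 : 0 < m := lt_min hΔ₁ hε'0
  set K : ℝ := (1-ε)*m^2/2 with hKdef
  have hK0 : 0 < K := by
    rw [hKdef]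
    exact div_pos (mul_pos h1ε (pow_pos hm0 2)) two_pos
  have hsK : 0 < Real.sqrt K := Real.sqrt_pos.mpr hK0
  set q : ℝ := γ * Real.sqrt K / (C₂ + 1) with hqdef
  have hq0 : 0 < q := div_pos (mul_pos hγ0 hsK) (by linarith)
  set T₀ : ℝ := if M + D = N then 1 else (max 1 (2*μ/κ)) ^ ((1:ℝ)/(1-a)) with hT₀def
  set Ts2 : ℝ := max 1 (q ^ (-(2:ℝ)*(N:ℝ))) with hTs2def
  set τs : ℝ := max (max τ₁ T₀) Ts2 with hτsdef
  have hτsτ₁ : τ₁ ≤ τs := le_trans (le_max_left _ _) (le_max_left _ _)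
  have hτs1 : 1 ≤ τs := le_trans hτ₁ hτsτ₁
  have hτs0 : 0 < τs := lt_of_lt_of_le zero_lt_one hτs1
  -- absorption estimate
  have Habsorb : ∀ t : ℝ, τs ≤ t → μ * t ^ (-(1:ℝ)) ≤ (κ - γ) * t ^ (-a) := by
    intro t ht
    have ht1 : 1 ≤ t := le_trans hτs1 ht
    have ht0 : (0:ℝ) < t := by linarith
    by_cases hcase : M + D = N
    · have haa : a = 1 := by
        rw [hadef, show (M:ℝ)+(D:ℝ) = (N:ℝ) by exact_mod_cast congrArg (Nat.cast : ℕ → ℝ) hcase]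
        exact div_self (ne_of_gt hN0)
      have hγeq : κ - γ = μ := by rw [hγdef, if_pos hcase]; ring
      rw [haa, hγeq]
    · have haltN : M + D < N := lt_of_le_of_ne hMDN hcase
      have halt : a < 1 := by
        rw [hadef, div_lt_one hN0]
        exact_mod_cast haltN
      have hγeq : κ - γ = κ/2 := by rw [hγdef, if_neg hcase]; ring
      rw [hγeq]
      set X : ℝ := max 1 (2*μ/κ) with hXdef
      have hX1 : (1:ℝ) ≤ X := le_max_left _ _
      have hX0 : (0:ℝ) < X := lt_of_lt_of_le one_pos hX1
      have hT₀val : T₀ = X ^ ((1:ℝ)/(1-a)) := by rw [hT₀def, if_neg hcase]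
      have h1a : 0 < 1 - a := by linarith
      have hTt : T₀ ≤ t := le_trans (le_trans (le_max_right τ₁ T₀) (le_max_left _ Ts2)) ht
      have hT₀0 : 0 < T₀ := by rw [hT₀val]; exact Real.rpow_pos_of_pos hX0 _
      have hT₀pow : (X ^ ((1:ℝ)/(1-a))) ^ (a-1) = X⁻¹ := by
        rw [← Real.rpow_mul hX0.le,
          show (1:ℝ)/(1-a)*(a-1) = -1 by field_simp; ring,
          Real.rpow_neg_one]
      have hta : t ^ (a-1) ≤ X⁻¹ := by
        calc t ^ (a-1) ≤ T₀ ^ (a-1) :=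
              Real.rpow_le_rpow_of_nonpos hT₀0 hTt (by linarith)
          _ = X⁻¹ := by rw [hT₀val]; exact hT₀pow
      have hsplit : t ^ (-(1:ℝ)) = t ^ (a-1) * t ^ (-a) := by
        rw [← Real.rpow_add ht0]
        congr 1
        ring
      rw [hsplit]
      have h2 : μ * t^(a-1) ≤ κ/2 := by
        have hmm : μ * t^(a-1) ≤ μ * X⁻¹ := mul_le_mul_of_nonneg_left hta hμ0.le
        have hXineq : μ * X⁻¹ ≤ κ/2 := by
          rw [← div_eq_mul_inv, div_le_iff₀ hX0]
          have hX2 : 2*μ/κ ≤ X := le_max_right _ _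
          rw [div_le_iff₀ hκ] at hX2
          linarith
        linarith
      calc μ * (t^(a-1) * t^(-a)) = (μ * t^(a-1)) * t^(-a) := by ring
        _ ≤ κ/2 * t^(-a) :=
            mul_le_mul_of_nonneg_right h2 (Real.rpow_nonneg ht0.le _)
  -- forcing smallness
  have Hτs2 : ∀ t : ℝ, τs ≤ t → C₂ * t ^ (a - b + μ/2) < γ * Real.sqrt K := by
    intro t ht
    have ht1 : 1 ≤ t := le_trans hτs1 ht
    have ht0 : (0:ℝ) < t := by linarith
    have hstep1 : t ^ (a - b + μ/2) ≤ t ^ (-(1:ℝ)/(2*(N:ℝ))) :=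
      Real.rpow_le_rpow_of_exponent_le ht1 he
    have hstep2 : t ^ (-(1:ℝ)/(2*(N:ℝ))) ≤ q := by
      have h1 : q ^ (-(2:ℝ)*(N:ℝ)) ≤ t :=
        le_trans (le_trans (le_max_right _ _) (le_max_right (max τ₁ T₀) Ts2)) ht
      have h2 : (0:ℝ) < q ^ (-(2:ℝ)*(N:ℝ)) := Real.rpow_pos_of_pos hq0 _
      have hexp : -(1:ℝ)/(2*(N:ℝ)) ≤ 0 := by
        apply div_nonpos_iff.mpr
        exact Or.inr ⟨by linarith, by linarith⟩
      calc t ^ (-(1:ℝ)/(2*(N:ℝ))) ≤ (q ^ (-(2:ℝ)*(N:ℝ))) ^ (-(1:ℝ)/(2*(N:ℝ))) :=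
            Real.rpow_le_rpow_of_nonpos h2 h1 hexp
        _ = q := by
            rw [← Real.rpow_mul hq0.le,
              show (-(2:ℝ)*(N:ℝ)) * (-(1:ℝ)/(2*(N:ℝ))) = 1 by
                field_simp,
              Real.rpow_one]
    have hqlt : C₂ * q < γ * Real.sqrt K := by
      have hP : 0 < γ * Real.sqrt K := mul_pos hγ0 hsK
      have hfrac : C₂ / (C₂+1) < 1 := (div_lt_one (by linarith)).mpr (by linarith)
      calc C₂ * q = (C₂/(C₂+1)) * (γ*Real.sqrt K) := by rw [hqdef]; ring
        _ < 1 * (γ*Real.sqrt K) := mul_lt_mul_of_pos_right hfrac hP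
        _ = γ * Real.sqrt K := one_mul _
    calc C₂ * t ^ (a - b + μ/2) ≤ C₂ * q :=
          mul_le_mul_of_nonneg_left (le_trans hstep1 hstep2) hC₂0
      _ < γ * Real.sqrt K := hqlt
  -- initial radius
  set δ : ℝ := Real.sqrt (K * τs ^ (-μ) / (2*(1+ε))) with hδdef
  have hτsμ0 : 0 < τs ^ (-μ) := Real.rpow_pos_of_pos hτs0 _
  have hδin : 0 < K * τs ^ (-μ) / (2*(1+ε)) := by
    apply div_pos (mul_pos hK0 hτsμ0)
    linarith
  have hδ0 : 0 < δ := Real.sqrt_pos.mpr hδin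
  have hδsq : δ^2 = K * τs ^ (-μ) / (2*(1+ε)) := Real.sq_sqrt hδin.le
  have hτsμ1 : τs ^ (-μ) ≤ 1 :=
    Real.rpow_le_one_of_one_le_of_nonpos hτs1 (neg_nonpos.mpr hμ0.le)
  have hδK : δ^2 ≤ K/2 := by
    rw [hδsq, div_le_div_iff₀ (by linarith) two_pos]
    linarith [mul_le_mul_of_nonneg_left hτsμ1 hK0.le, mul_nonneg hK0.le hε0.le,
      mul_pos hK0 hτsμ0]
  refine ⟨δ, hδ0, τs, hτsτ₁, ?_⟩
  intro ρ φ hsol hinit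
  have hΔ'Δ₁ : m^2 ≤ Δ₁^2 := by
    have hmΔ : m ≤ Δ₁ := min_le_left _ _
    exact pow_le_pow_left₀ hm0.le hmΔ 2
  have hKdiv : K/(1-ε) = m^2/2 := by
    rw [hKdef]
    field_simp
  have hKm : K / (1-ε) < m^2 := by
    rw [hKdiv]
    linarith [pow_pos hm0 2]
  -- continuity of the relevant functions
  have hρct : ∀ t, τs ≤ t → ContinuousAt ρ t :=
    fun t ht => ((hsol t (le_trans hτsτ₁ ht)).1).continuousAt
  have hφct : ∀ t, τs ≤ t → ContinuousAt φ t :=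
    fun t ht => ((hsol t (le_trans hτsτ₁ ht)).2).continuousAt
  have hvct : ∀ t ≥ τs, ContinuousAt (fun s => V (ρ s) (φ s) s) t := by
    intro t ht
    have hF : ContinuousAt (fun p : ℝ×ℝ×ℝ => V p.1 p.2.1 p.2.2) (ρ t, φ t, t) :=
      (hV.continuous).continuousAt
    have hcurve : ContinuousAt (fun s : ℝ => (ρ s, φ s, s)) t :=
      (hρct t ht).prodMk ((hφct t ht).prodMk continuousAt_id)
    exact hF.tendsto.comp hcurve
  have hGct : ∀ t ≥ τs, ContinuousAt (fun s => W0 Q lam0 N L (ρ s) (φ s) τ₁) t := by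
    intro t ht
    have h1 := hρct t ht
    have h2 := hφct t ht
    show ContinuousAt
      (fun s => (Q * ρ s ^ 2 + τ₁ ^ (-(L:ℝ)/(N:ℝ)) * lam0 * φ s ^ 2)/2) t
    exact ((continuousAt_const.mul (h1.pow 2)).add
      (continuousAt_const.mul (h2.pow 2))).div_const _
  have hwct : ∀ t ≥ τs, ContinuousAt (fun s : ℝ => K * s ^ (-μ)) t := by
    intro t ht
    have ht0 : t ≠ 0 := ne_of_gt (lt_of_lt_of_le hτs0 ht)
    exact continuousAt_const.mul (Real.continuousAt_rpow_const t _ (Or.inl ht0))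
  -- initial conditions for the barrier
  have hδΔ' : δ^2 < m^2 := by
    refine lt_of_le_of_lt hδK ?_
    rw [hKdef]
    linarith [pow_pos hm0 2, mul_pos hε0 (pow_pos hm0 2)]
  have h0G : W0 Q lam0 N L (ρ τs) (φ τs) τ₁ < m^2 := lt_of_le_of_lt hinit hδΔ'
  have hregion_τs : W0 Q lam0 N L (ρ τs) (φ τs) τ₁ ≤ Δ₁^2 :=
    le_trans hinit (le_trans hδΔ'.le hΔ'Δ₁)
  have h0v : V (ρ τs) (φ τs) τs < K * τs ^ (-μ) := by
    have hsand' := (hsand τs hτsτ₁ (ρ τs) (φ τs) hregion_τs).2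
    have hW0mono : W0 Q lam0 N L (ρ τs) (φ τs) τs ≤ W0 Q lam0 N L (ρ τs) (φ τs) τ₁ :=
      W0_mono hQ hlam0 N L (by linarith : (0:ℝ) < τ₁) hτsτ₁ _ _
    calc V (ρ τs) (φ τs) τs ≤ (1+ε) * W0 Q lam0 N L (ρ τs) (φ τs) τs := hsand'
      _ ≤ (1+ε) * W0 Q lam0 N L (ρ τs) (φ τs) τ₁ :=
          mul_le_mul_of_nonneg_left hW0mono (by linarith)
      _ ≤ (1+ε) * δ^2 := mul_le_mul_of_nonneg_left hinit (by linarith)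
      _ = K * τs^(-μ)/2 := by
          rw [hδsq]
          field_simp
      _ < K * τs^(-μ) := by linarith [mul_pos hK0 hτsμ0]
  -- main quantitative bound under the barrier
  have Hbound : ∀ t, τs ≤ t → V (ρ t) (φ t) t ≤ K * t ^ (-μ) →
      W0 Q lam0 N L (ρ t) (φ t) τ₁ ≤ Δ₁^2 →
      (1-ε) * W0 Q lam0 N L (ρ t) (φ t) τ₁ ≤ K * t^(L'-μ) := by
    intro t ht hvw hregt
    have htτ₁ : τ₁ ≤ t := le_trans hτsτ₁ ht
    have ht1 : (1:ℝ) ≤ t := le_trans hτs1 ht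
    have ht0 : (0:ℝ) < t := by linarith
    have hlow := (hsand t htτ₁ (ρ t) (φ t) hregt).1
    have hW0t : (1-ε) * W0 Q lam0 N L (ρ t) (φ t) t ≤ K * t^(-μ) := le_trans hlow hvw
    have hGle : W0 Q lam0 N L (ρ t) (φ t) τ₁ ≤ t ^ L' * W0 Q lam0 N L (ρ t) (φ t) t := by
      have := W0_tau1_le hQ hlam0 N L hτ₁ htτ₁ (ρ t) (φ t)
      rw [hL'def]
      exact this
    have hpow : t ^ L' * (K * t^(-μ)) = K * t^(L'-μ) := by
      rw [show t ^ L' * (K * t^(-μ)) = K * (t ^ L' * t^(-μ)) by ring,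
        ← Real.rpow_add ht0]
      ring_nf
    calc (1-ε) * W0 Q lam0 N L (ρ t) (φ t) τ₁
        ≤ (1-ε) * (t ^ L' * W0 Q lam0 N L (ρ t) (φ t) t) :=
          mul_le_mul_of_nonneg_left hGle h1ε.le
      _ = t ^ L' * ((1-ε) * W0 Q lam0 N L (ρ t) (φ t) t) := by ring
      _ ≤ t ^ L' * (K * t^(-μ)) :=
          mul_le_mul_of_nonneg_left hW0t (Real.rpow_nonneg ht0.le _)
      _ = K * t^(L'-μ) := hpow
  have hreg : ∀ t ≥ τs, V (ρ t) (φ t) t ≤ K * t ^ (-μ) →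
      W0 Q lam0 N L (ρ t) (φ t) τ₁ ≤ m^2 → W0 Q lam0 N L (ρ t) (φ t) τ₁ < m^2 := by
    intro t ht hvw hGt
    have ht1 : (1:ℝ) ≤ t := le_trans hτs1 ht
    have hb := Hbound t ht hvw (le_trans hGt hΔ'Δ₁)
    have hple : t ^ (L'-μ) ≤ 1 :=
      Real.rpow_le_one_of_one_le_of_nonpos ht1 (by linarith)
    have h1 : (1-ε) * W0 Q lam0 N L (ρ t) (φ t) τ₁ ≤ K := by
      linarith [mul_le_mul_of_nonneg_left hple hK0.le]
    have h2 : W0 Q lam0 N L (ρ t) (φ t) τ₁ ≤ K/(1-ε) := by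
      rw [le_div_iff₀ h1ε]
      linarith
    linarith [hKm]
  -- key derivative estimate
  have hkey : ∀ t > τs, W0 Q lam0 N L (ρ t) (φ t) τ₁ ≤ m^2 →
      V (ρ t) (φ t) t = K * t ^ (-μ) →
      (∀ s ∈ Set.Ico τs t, V (ρ s) (φ s) s < K * s ^ (-μ)) → False := by
    intro t ht hGt hveq hleft
    have htτ₁ : τ₁ ≤ t := le_trans hτsτ₁ ht.le
    have ht1 : (1:ℝ) ≤ t := le_trans hτs1 ht.le
    have ht0 : (0:ℝ) < t := by linarith
    have hregt : W0 Q lam0 N L (ρ t) (φ t) τ₁ ≤ Δ₁^2 := le_trans hGt hΔ'Δ₁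
    obtain ⟨hDρ, hDφ⟩ := hsol t htτ₁
    have hvd := hasDerivAt_comp3 hV hDρ hDφ
    have hdveq : t ^ (-(M:ℝ)/(N:ℝ)) * A (ρ t) (φ t) t * deriv (fun r => V r (φ t) t) (ρ t)
        + t ^ (-(M:ℝ)/(N:ℝ)) * B (ρ t) (φ t) t * deriv (fun p => V (ρ t) p t) (φ t)
        + deriv (fun u => V (ρ t) (φ t) u) t = DV N M A B V (ρ t) (φ t) t := by
      rw [DV]
      ring
    rw [hdveq] at hvd
    have hwd : HasDerivAt (fun s : ℝ => K * s ^ (-μ)) (K * (-μ * t^(-μ-1))) t :=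
      (Real.hasDerivAt_rpow_const (Or.inl ht0.ne')).const_mul K
    -- estimate the derivative of v
    have hdec := hdecay t htτ₁ (ρ t) (φ t) hregt
    have hea : -((M:ℝ)+(D:ℝ))/(N:ℝ) = -a := by rw [hadef]; ring
    have heb : -((M:ℝ)+(n:ℝ)+1)/(N:ℝ) = -b := by rw [hbdef]; ring
    rw [hea, heb] at hdec
    have hlow := (hsand t htτ₁ (ρ t) (φ t) hregt).1
    have hgb := g_bound hQ hlam0 N L ht1 (ρ t) (φ t)
    have hW0v : W0 Q lam0 N L (ρ t) (φ t) t ≤ K * t^(-μ) / (1-ε) := by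
      rw [le_div_iff₀ h1ε]
      linarith [hlow, hveq.le, hveq.ge]
    have hsqW : Real.sqrt (W0 Q lam0 N L (ρ t) (φ t) t)
        ≤ Real.sqrt K * t^(-μ/2) / Real.sqrt (1-ε) := by
      have h1 : Real.sqrt (W0 Q lam0 N L (ρ t) (φ t) t)
          ≤ Real.sqrt (K * t^(-μ) / (1-ε)) := Real.sqrt_le_sqrt hW0v
      have h2 : Real.sqrt (K * t^(-μ) / (1-ε))
          = Real.sqrt K * t^(-μ/2) / Real.sqrt (1-ε) := by
        have hsq2 : Real.sqrt (t^(-μ)) = t^(-μ/2) := by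
          rw [Real.sqrt_eq_rpow, ← Real.rpow_mul ht0.le]
          congr 1
          ring
        rw [Real.sqrt_div (mul_pos hK0 (Real.rpow_pos_of_pos ht0 _)).le,
          Real.sqrt_mul hK0.le, hsq2]
      rw [← h2]; exact h1
    have htb0 : (0:ℝ) ≤ t ^ (-b) := (Real.rpow_pos_of_pos ht0 _).le
    have hforce : C₀ * t^(-b) * (Q * |ρ t| + t ^ (-(L:ℝ)/(N:ℝ)) * lam0 * |φ t|)
        ≤ C₂ * Real.sqrt K * (t^(-b) * t^(-μ/2)) := by
      have h1 : Q * |ρ t| + t ^ (-(L:ℝ)/(N:ℝ)) * lam0 * |φ t|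
          ≤ c₁ * (Real.sqrt K * t^(-μ/2) / Real.sqrt (1-ε)) := by
        refine le_trans hgb ?_
        rw [hc₁def]
        exact mul_le_mul_of_nonneg_left hsqW (by positivity)
      calc C₀ * t^(-b) * (Q * |ρ t| + t ^ (-(L:ℝ)/(N:ℝ)) * lam0 * |φ t|)
          ≤ C₀ * t^(-b) * (c₁ * (Real.sqrt K * t^(-μ/2) / Real.sqrt (1-ε))) :=
            mul_le_mul_of_nonneg_left h1 (mul_nonneg hC₀ htb0)
        _ = (C₀ * c₁ / Real.sqrt (1-ε)) * Real.sqrt K * (t^(-b) * t^(-μ/2)) := by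
            ring
        _ = C₂ * Real.sqrt K * (t^(-b) * t^(-μ/2)) := by rw [hC₂def]
    have hfs : C₂ * Real.sqrt K * (t^(-b) * t^(-μ/2)) < γ * K * (t^(-a) * t^(-μ)) := by
      have h1 := Hτs2 t ht.le
      have hpos : (0:ℝ) < Real.sqrt K * t^(-a-μ) :=
        mul_pos hsK (Real.rpow_pos_of_pos ht0 _)
      have hprod : t^(a-b+μ/2) * t^(-a-μ) = t^(-b) * t^(-μ/2) := by
        rw [← Real.rpow_add ht0, ← Real.rpow_add ht0,
          show a-b+μ/2 + (-a-μ) = -b + -(μ/2) by ring]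
        congr 1
        ring
      have hprod2 : t^(-a-μ) = t^(-a) * t^(-μ) := by
        rw [← Real.rpow_add ht0, show -a + -μ = -a-μ by ring]
      calc C₂ * Real.sqrt K * (t^(-b) * t^(-μ/2))
          = (C₂ * t^(a-b+μ/2)) * (Real.sqrt K * t^(-a-μ)) := by rw [← hprod]; ring
        _ < (γ * Real.sqrt K) * (Real.sqrt K * t^(-a-μ)) :=
            mul_lt_mul_of_pos_right h1 hpos
        _ = γ * (Real.sqrt K * Real.sqrt K) * t^(-a-μ) := by ring
        _ = γ * K * (t^(-a) * t^(-μ)) := by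
            rw [Real.mul_self_sqrt hK0.le, hprod2]
    have habs : μ * K * t^(-μ-1) ≤ (κ-γ) * K * (t^(-a) * t^(-μ)) := by
      have h1 := Habsorb t ht.le
      have hpos : (0:ℝ) ≤ K * t^(-μ) := (mul_pos hK0 (Real.rpow_pos_of_pos ht0 _)).le
      have hprod : t^(-μ-1) = t^(-(1:ℝ)) * t^(-μ) := by
        rw [← Real.rpow_add ht0,
          show -(1:ℝ) + -μ = -μ-1 by ring]
      calc μ * K * t^(-μ-1) = (μ * t^(-(1:ℝ))) * (K * t^(-μ)) := by rw [hprod]; ring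
        _ ≤ ((κ-γ) * t^(-a)) * (K * t^(-μ)) := mul_le_mul_of_nonneg_right h1 hpos
        _ = (κ-γ) * K * (t^(-a) * t^(-μ)) := by ring
    have hvle : DV N M A B V (ρ t) (φ t) t
        ≤ -κ * t^(-a) * (K * t^(-μ)) + C₂ * Real.sqrt K * (t^(-b) * t^(-μ/2)) := by
      have h2 : -κ * t^(-a) * V (ρ t) (φ t) t = -κ * t^(-a) * (K * t^(-μ)) := by
        rw [hveq]
      calc DV N M A B V (ρ t) (φ t) t
          ≤ -κ * t^(-a) * V (ρ t) (φ t) t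
            + C₀ * t^(-b) * (Q * |ρ t| + t ^ (-(L:ℝ)/(N:ℝ)) * lam0 * |φ t|) := hdec
        _ ≤ -κ * t^(-a) * (K * t^(-μ)) + C₂ * Real.sqrt K * (t^(-b) * t^(-μ/2)) := by
            rw [h2]
            linarith [hforce]
    have hlt : DV N M A B V (ρ t) (φ t) t < K * (-μ * t^(-μ-1)) := by
      have hfin : K * (-μ * t^(-μ-1)) = -(μ * K * t^(-μ-1)) := by ring
      rw [hfin]
      linarith [hfs, habs, hvle]
    have hgd : HasDerivAt (fun s => V (ρ s) (φ s) s - K * s^(-μ))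
        (DV N M A B V (ρ t) (φ t) t - K * (-μ * t^(-μ-1))) t := hvd.sub hwd
    have h0 : V (ρ t) (φ t) t - K * t^(-μ) = 0 := by rw [hveq]; ring
    have hneg : ∀ s ∈ Set.Ico τs t, V (ρ s) (φ s) s - K * s^(-μ) < 0 :=
      fun s hs => sub_neg.mpr (hleft s hs)
    have hge := slope_nonneg_of_left_neg hgd ht h0 hneg
    linarith
  -- apply the barrier lemma
  have Hmain : ∀ t ≥ τs, V (ρ t) (φ t) t < K * t^(-μ)
      ∧ W0 Q lam0 N L (ρ t) (φ t) τ₁ < m^2 :=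
    barrier hvct hwct hGct h0v h0G hreg hkey
  have HG : ∀ t, τs ≤ t → W0 Q lam0 N L (ρ t) (φ t) τ₁ ≤ (K/(1-ε)) * t^(-(μ-L')) := by
    intro t ht
    obtain ⟨h1, h2⟩ := Hmain t ht
    have hb := Hbound t ht h1.le (le_trans h2.le hΔ'Δ₁)
    have hexp : t^(L'-μ) = t^(-(μ-L')) := by
      rw [show L'-μ = -(μ-L') by ring]
    rw [hexp] at hb
    rw [div_mul_eq_mul_div, le_div_iff₀ h1ε]
    linarith
  refine ⟨?_, ?_, ?_⟩
  · intro τ hτ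
    have h2 := (Hmain τ hτ).2
    have hm2 : m^2 ≤ ε'^2 := by
      have hme : m ≤ ε' := min_le_right _ _
      exact pow_le_pow_left₀ hm0.le hme 2
    linarith
  · exact ⟨μ - L', by linarith, K/(1-ε), div_pos hK0 h1ε, τs, le_refl τs,
      fun τ hτ => HG τ hτ⟩
  · have hc0 : (0:ℝ) < τ₁ ^ (-(L:ℝ)/(N:ℝ)) := Real.rpow_pos_of_pos (by linarith) _
    set C : ℝ := K/(1-ε) with hCdef
    have hC0 : 0 < C := div_pos hK0 h1ε
    have hη : 0 < μ - L' := by linarith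
    have hρsq : ∀ τ, τs ≤ τ → (ρ τ)^2 ≤ 2*C/Q * τ^(-(μ-L')) := by
      intro τ hτ
      have h := HG τ hτ
      have hW : Q * (ρ τ)^2 / 2 ≤ W0 Q lam0 N L (ρ τ) (φ τ) τ₁ := by
        show Q * (ρ τ)^2/2 ≤ (Q * (ρ τ)^2 + τ₁ ^ (-(L:ℝ)/(N:ℝ)) * lam0 * (φ τ)^2)/2
        linarith [mul_nonneg (mul_nonneg hc0.le hlam0.le) (sq_nonneg (φ τ))]
      rw [show 2*C/Q * τ^(-(μ-L')) = 2*(C * τ^(-(μ-L')))/Q by ring, le_div_iff₀ hQ]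
      linarith
    have hφsq : ∀ τ, τs ≤ τ →
        (φ τ)^2 ≤ 2*C/(τ₁ ^ (-(L:ℝ)/(N:ℝ)) * lam0) * τ^(-(μ-L')) := by
      intro τ hτ
      have h := HG τ hτ
      have hcl : 0 < τ₁ ^ (-(L:ℝ)/(N:ℝ)) * lam0 := mul_pos hc0 hlam0
      have hW : τ₁ ^ (-(L:ℝ)/(N:ℝ)) * lam0 * (φ τ)^2 / 2
          ≤ W0 Q lam0 N L (ρ τ) (φ τ) τ₁ := by
        show τ₁ ^ (-(L:ℝ)/(N:ℝ)) * lam0 * (φ τ)^2/2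
          ≤ (Q * (ρ τ)^2 + τ₁ ^ (-(L:ℝ)/(N:ℝ)) * lam0 * (φ τ)^2)/2
        linarith [mul_nonneg hQ.le (sq_nonneg (ρ τ))]
      rw [show 2*C/(τ₁ ^ (-(L:ℝ)/(N:ℝ)) * lam0) * τ^(-(μ-L'))
        = 2*(C * τ^(-(μ-L')))/(τ₁ ^ (-(L:ℝ)/(N:ℝ)) * lam0) by ring, le_div_iff₀ hcl]
      linarith
    have hrt : Filter.Tendsto (fun τ : ℝ => τ^(-(μ-L'))) Filter.atTop (nhds 0) :=
      tendsto_rpow_neg_atTop hη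
    have hρ0 : Filter.Tendsto ρ Filter.atTop (nhds 0) := by
      have hsq : Filter.Tendsto (fun τ => (ρ τ)^2) Filter.atTop (nhds 0) := by
        apply squeeze_zero' (Filter.Eventually.of_forall fun τ => sq_nonneg _)
          ((Filter.eventually_ge_atTop τs).mono hρsq)
        simpa using hrt.const_mul (2*C/Q)
      rw [tendsto_zero_iff_abs_tendsto_zero]
      have h := (Real.continuous_sqrt.tendsto 0).comp hsq
      simp only [Function.comp_def, Real.sqrt_sq_eq_abs, Real.sqrt_zero] at h
      exact h
    have hφ0 : Filter.Tendsto φ Filter.atTop (nhds 0) := by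
      have hsq : Filter.Tendsto (fun τ => (φ τ)^2) Filter.atTop (nhds 0) := by
        apply squeeze_zero' (Filter.Eventually.of_forall fun τ => sq_nonneg _)
          ((Filter.eventually_ge_atTop τs).mono hφsq)
        simpa using hrt.const_mul (2*C/(τ₁ ^ (-(L:ℝ)/(N:ℝ)) * lam0))
      rw [tendsto_zero_iff_abs_tendsto_zero]
      have h := (Real.continuous_sqrt.tendsto 0).comp hsq
      simp only [Function.comp_def, Real.sqrt_sq_eq_abs, Real.sqrt_zero] at h
      exact h
    exact hρ0.prodMk_nhds hφ0
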